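/- Multi-head attention layer bound (Lemma lem227, simplified form): let n, m ≥ 2, H ≥ 1, d ≥ 1 be natural numbers, let W_O ∈ ℝ^{n×m} and W^{j,k} ∈ ℝ^{m×n} for j ∈ [d], k ∈ [H] be fixed matrices, for each (j, k) let T_{j,k} : ℝ^{m×m} → ℝ^{m×m} be either the identity or the transpose, and let c ∈ {0, 1}. For f : 𝒳^M × 𝒳^M → ℝ^{n×m} define (L ∘ f)(A, B) := W_O · ( Σ_{k=1}^{H} ∏_{j=1}^{d} T_{j,k}( W^{j,k} · f(A, B) ) ) + c · f(A, B). Then sep(L ∘ f) ≤ H · m^d · n^{d+1} · sep(f)^d. -/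

import Mathlib

open scoped BigOperators
open Matrix

/-- Separation rank of a scalar-valued function of two groups of variables. -/
noncomputable def sepRank {𝒳 : Type*} {M : ℕ}
    (y : (Fin M → 𝒳) → (Fin M → 𝒳) → ℝ) : ℕ∞ :=
  sInf {R : ℕ∞ | ∃ r : ℕ, R = (r : ℕ∞) ∧ ∃ g g' : Fin r → (Fin M → 𝒳) → ℝ,
    ∀ A B, y A B = ∑ i, g i A * g' i B}

/-- Separation rank of a matrix-valued function: maximum over output entries. -/
noncomputable def sepRankM {𝒳 : Type*} {M n m : ℕ}
    (f : (Fin M → 𝒳) → (Fin M → 𝒳) → Matrix (Fin n) (Fin m) ℝ) : ℕ∞ :=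
  ⨆ i : Fin n, ⨆ j : Fin m, sepRank (fun A B => f A B i j)

/-- Apply either the identity (`b = false`) or the transpose (`b = true`). -/
def applyT {m : ℕ} (b : Bool) (X : Matrix (Fin m) (Fin m) ℝ) :
    Matrix (Fin m) (Fin m) ℝ :=
  if b then Xᵀ else X

/-- A multi-head linear transformer layer with `H` heads and degree `d`:
sum over the heads a `d`-fold matrix product of linearly transformed (and
possibly transposed) copies of the input, apply an output matrix `W_O`,
and optionally add a residual copy of the input. -/
noncomputable def mhLayer {n m : ℕ} (H d : ℕ)
    (WO : Matrix (Fin n) (Fin m) ℝ)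
    (W : Fin d → Fin H → Matrix (Fin m) (Fin n) ℝ)
    (T : Fin d → Fin H → Bool) (c : ℝ)
    (Y : Matrix (Fin n) (Fin m) ℝ) : Matrix (Fin n) (Fin m) ℝ :=
  WO * (∑ k : Fin H, (List.ofFn fun j : Fin d => applyT (T j k) (W j k * Y)).prod)
    + c • Y

section Aux

variable {𝒳 : Type*} {M : ℕ}

/-- `y` has a separation representation with `r` terms. -/
def HasRep (y : (Fin M → 𝒳) → (Fin M → 𝒳) → ℝ) (r : ℕ) : Prop :=
  ∃ g g' : Fin r → (Fin M → 𝒳) → ℝ, ∀ A B, y A B = ∑ i, g i A * g' i B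

lemma HasRep.congr {y z : (Fin M → 𝒳) → (Fin M → 𝒳) → ℝ} {r : ℕ}
    (h : HasRep z r) (hyz : ∀ A B, y A B = z A B) : HasRep y r := by
  obtain ⟨g, g', hg⟩ := h
  exact ⟨g, g', fun A B => (hyz A B).trans (hg A B)⟩

lemma hasRep_of_fintype {ι : Type} [Fintype ι]
    {y : (Fin M → 𝒳) → (Fin M → 𝒳) → ℝ} {r : ℕ}
    (hcard : Fintype.card ι = r)
    (g g' : ι → (Fin M → 𝒳) → ℝ)
    (h : ∀ A B, y A B = ∑ i : ι, g i A * g' i B) : HasRep y r := by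
  let e : ι ≃ Fin r := Fintype.equivFinOfCardEq hcard
  refine ⟨fun i => g (e.symm i), fun i => g' (e.symm i), fun A B => ?_⟩
  rw [h A B]
  exact Fintype.sum_equiv e _ _ (fun i => by simp)

lemma HasRep.mono {y : (Fin M → 𝒳) → (Fin M → 𝒳) → ℝ} {r s : ℕ}
    (h : HasRep y r) (hrs : r ≤ s) : HasRep y s := by
  obtain ⟨g, g', hg⟩ := h
  refine hasRep_of_fintype (ι := Fin r ⊕ Fin (s - r)) (by simp; omega)
    (Sum.elim g 0) (Sum.elim g' 0) (fun A B => ?_)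
  rw [hg A B, Fintype.sum_sum_type]
  simp

lemma HasRep.add {y z : (Fin M → 𝒳) → (Fin M → 𝒳) → ℝ} {r s : ℕ}
    (hy : HasRep y r) (hz : HasRep z s) :
    HasRep (fun A B => y A B + z A B) (r + s) := by
  obtain ⟨g, g', hg⟩ := hy
  obtain ⟨h, h', hh⟩ := hz
  refine hasRep_of_fintype (ι := Fin r ⊕ Fin s) (by simp)
    (Sum.elim g h) (Sum.elim g' h') (fun A B => ?_)
  rw [Fintype.sum_sum_type]
  simp [hg A B, hh A B]

lemma HasRep.mul {y z : (Fin M → 𝒳) → (Fin M → 𝒳) → ℝ} {r s : ℕ}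
    (hy : HasRep y r) (hz : HasRep z s) :
    HasRep (fun A B => y A B * z A B) (r * s) := by
  obtain ⟨g, g', hg⟩ := hy
  obtain ⟨h, h', hh⟩ := hz
  refine hasRep_of_fintype (ι := Fin r × Fin s) (by simp)
    (fun p A => g p.1 A * h p.2 A) (fun p B => g' p.1 B * h' p.2 B)
    (fun A B => ?_)
  rw [hg A B, hh A B, Finset.sum_mul_sum, Fintype.sum_prod_type]
  exact Finset.sum_congr rfl fun i _ => Finset.sum_congr rfl fun j _ => by ring

lemma HasRep.const_mul {y : (Fin M → 𝒳) → (Fin M → 𝒳) → ℝ} {r : ℕ}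
    (hy : HasRep y r) (a : ℝ) : HasRep (fun A B => a * y A B) r := by
  obtain ⟨g, g', hg⟩ := hy
  refine ⟨fun i A => a * g i A, g', fun A B => ?_⟩
  show a * y A B = _
  rw [hg A B, Finset.mul_sum]
  exact Finset.sum_congr rfl fun i _ => by ring

lemma hasRep_finsum {κ : Type} [Fintype κ]
    {y : κ → (Fin M → 𝒳) → (Fin M → 𝒳) → ℝ} {r : ℕ}
    (h : ∀ k, HasRep (y k) r) :
    HasRep (fun A B => ∑ k, y k A B) (Fintype.card κ * r) := by
  choose g g' hg using h
  refine hasRep_of_fintype (ι := κ × Fin r) (by simp)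
    (fun p => g p.1 p.2) (fun p => g' p.1 p.2) (fun A B => ?_)
  rw [Fintype.sum_prod_type]
  exact Finset.sum_congr rfl fun k _ => hg k A B

/-- Entrywise separation representation of a matrix-valued function. -/
def MRep {a b : ℕ} (f : (Fin M → 𝒳) → (Fin M → 𝒳) → Matrix (Fin a) (Fin b) ℝ)
    (r : ℕ) : Prop :=
  ∀ i j, HasRep (fun A B => f A B i j) r

lemma MRep.congr {a b : ℕ}
    {f g : (Fin M → 𝒳) → (Fin M → 𝒳) → Matrix (Fin a) (Fin b) ℝ} {r : ℕ}
    (h : MRep g r) (hfg : ∀ A B, f A B = g A B) : MRep f r :=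
  fun i j => (h i j).congr fun A B => by rw [hfg A B]

lemma MRep.mono {a b : ℕ}
    {f : (Fin M → 𝒳) → (Fin M → 𝒳) → Matrix (Fin a) (Fin b) ℝ} {r s : ℕ}
    (h : MRep f r) (hrs : r ≤ s) : MRep f s :=
  fun i j => (h i j).mono hrs

lemma MRep.constMul {a a' b : ℕ}
    {f : (Fin M → 𝒳) → (Fin M → 𝒳) → Matrix (Fin a') (Fin b) ℝ} {r : ℕ}
    (h : MRep f r) (C : Matrix (Fin a) (Fin a') ℝ) :
    MRep (fun A B => C * f A B) (a' * r) := by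
  intro i j
  have h1 := hasRep_finsum (fun s : Fin a' => (h s j).const_mul (C i s))
  simp only [Fintype.card_fin] at h1
  exact h1.congr fun A B => by simp [Matrix.mul_apply]

lemma MRep.matMul {a b c' : ℕ}
    {F : (Fin M → 𝒳) → (Fin M → 𝒳) → Matrix (Fin a) (Fin b) ℝ}
    {G : (Fin M → 𝒳) → (Fin M → 𝒳) → Matrix (Fin b) (Fin c') ℝ} {r s : ℕ}
    (hF : MRep F r) (hG : MRep G s) :
    MRep (fun A B => F A B * G A B) (b * (r * s)) := by
  intro i j
  have h1 := hasRep_finsum (fun p : Fin b => (hF i p).mul (hG p j))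
  simp only [Fintype.card_fin] at h1
  exact h1.congr fun A B => by simp [Matrix.mul_apply]

lemma MRep.smul {a b : ℕ}
    {f : (Fin M → 𝒳) → (Fin M → 𝒳) → Matrix (Fin a) (Fin b) ℝ} {r : ℕ}
    (h : MRep f r) (c : ℝ) : MRep (fun A B => c • f A B) r :=
  fun i j => ((h i j).const_mul c).congr fun A B => by
    simp [Matrix.smul_apply]

lemma MRep.add {a b : ℕ}
    {f g : (Fin M → 𝒳) → (Fin M → 𝒳) → Matrix (Fin a) (Fin b) ℝ} {r s : ℕ}
    (hf : MRep f r) (hg : MRep g s) :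
    MRep (fun A B => f A B + g A B) (r + s) :=
  fun i j => ((hf i j).add (hg i j)).congr fun A B => by
    simp [Matrix.add_apply]

lemma MRep.applyT {a : ℕ}
    {f : (Fin M → 𝒳) → (Fin M → 𝒳) → Matrix (Fin a) (Fin a) ℝ} {r : ℕ}
    (h : MRep f r) (bl : Bool) :
    MRep (fun A B => applyT bl (f A B)) r := by
  cases bl
  · exact h.congr fun A B => by simp [_root_.applyT]
  · intro i j
    exact (h j i).congr fun A B => by simp [_root_.applyT]

lemma MRep.finsum {a b : ℕ} {κ : Type} [Fintype κ]
    {G : κ → (Fin M → 𝒳) → (Fin M → 𝒳) → Matrix (Fin a) (Fin b) ℝ} {r : ℕ}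
    (h : ∀ k, MRep (G k) r) :
    MRep (fun A B => ∑ k, G k A B) (Fintype.card κ * r) := by
  intro i j
  exact (hasRep_finsum (fun k => h k i j)).congr fun A B => by
    simp [Matrix.sum_apply]

lemma MRep.listProd {m₀ : ℕ} {q : ℕ} :
    ∀ (d : ℕ) (Φ : Fin (d + 1) → (Fin M → 𝒳) → (Fin M → 𝒳) → Matrix (Fin m₀) (Fin m₀) ℝ),
    (∀ j, MRep (Φ j) q) →
    MRep (fun A B => (List.ofFn fun j => Φ j A B).prod) (m₀ ^ d * q ^ (d + 1)) := by
  intro d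
  induction d with
  | zero =>
    intro Φ h
    have : MRep (fun A B => (List.ofFn fun j => Φ j A B).prod) q :=
      (h 0).congr fun A B => by
        simp [List.ofFn_succ]
    simpa using this
  | succ d ih =>
    intro Φ h
    have hrest := ih (fun j => Φ j.succ) (fun j => h j.succ)
    have hmul := (h 0).matMul (a := m₀) (b := m₀) (c' := m₀) hrest
    have heq : m₀ * (q * (m₀ ^ d * q ^ (d + 1))) = m₀ ^ (d + 1) * q ^ (d + 1 + 1) := by
      ring
    rw [heq] at hmul
    exact hmul.congr fun A B => by
      rw [List.ofFn_succ, List.prod_cons]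

lemma sepRank_le_of_hasRep {y : (Fin M → 𝒳) → (Fin M → 𝒳) → ℝ} {r : ℕ}
    (h : HasRep y r) : sepRank y ≤ (r : ℕ∞) := by
  obtain ⟨g, g', hg⟩ := h
  exact sInf_le ⟨r, rfl, g, g', hg⟩

lemma hasRep_of_sepRank_le {y : (Fin M → 𝒳) → (Fin M → 𝒳) → ℝ} {r : ℕ}
    (h : sepRank y ≤ (r : ℕ∞)) : HasRep y r := by
  have hlt : sepRank y < ((r + 1 : ℕ) : ℕ∞) :=
    lt_of_le_of_lt h (by exact_mod_cast lt_add_one r)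
  obtain ⟨a, ha, halt⟩ := sInf_lt_iff.mp hlt
  obtain ⟨r', rfl, g, g', hg⟩ := ha
  have hr' : r' ≤ r := by
    have : r' < r + 1 := by exact_mod_cast halt
    omega
  exact HasRep.mono ⟨g, g', hg⟩ hr'

end Aux

/-- multi-head attention layer bound (Lemma lem227, simplified form). -/
theorem sepRank_mhLayer {𝒳 : Type*} {M n m : ℕ} (H d : ℕ)
    (hn : 2 ≤ n) (hm : 2 ≤ m) (hH : 1 ≤ H) (hd : 1 ≤ d)
    (WO : Matrix (Fin n) (Fin m) ℝ)
    (W : Fin d → Fin H → Matrix (Fin m) (Fin n) ℝ)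
    (T : Fin d → Fin H → Bool) (c : ℝ) (hc : c = 0 ∨ c = 1)
    (f : (Fin M → 𝒳) → (Fin M → 𝒳) → Matrix (Fin n) (Fin m) ℝ) :
    sepRankM (fun A B => mhLayer H d WO W T c (f A B))
      ≤ (H : ℕ∞) * (m : ℕ∞) ^ d * (n : ℕ∞) ^ (d + 1) * sepRankM f ^ d := by
  obtain ⟨d', rfl⟩ : ∃ d', d = d' + 1 := ⟨d - 1, by omega⟩
  rcases eq_top_or_lt_top (sepRankM f) with htop | hfin
  · -- infinite case: the right-hand side is ⊤
    rw [htop]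
    have h1 : (⊤ : ℕ∞) ^ (d' + 1) = ⊤ := ENat.top_pow (Nat.succ_ne_zero d')
    rw [h1]
    have h2 : ((H : ℕ∞) * (m : ℕ∞) ^ (d' + 1) * (n : ℕ∞) ^ (d' + 1 + 1)) ≠ 0 := by
      refine mul_ne_zero (mul_ne_zero ?_ (pow_ne_zero _ ?_)) (pow_ne_zero _ ?_) <;>
        simp <;> omega
    rw [ENat.mul_top h2]
    exact le_top
  · obtain ⟨R, hR⟩ : ∃ R : ℕ, sepRankM f = (R : ℕ∞) :=
      ⟨(sepRankM f).toNat, (ENat.coe_toNat hfin.ne).symm⟩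
    have hfR : MRep f R := by
      intro i j
      refine hasRep_of_sepRank_le ?_
      rw [← hR]
      exact le_iSup₂ (f := fun i j => sepRank fun A B => f A B i j) i j
    have h1 : ∀ (j : Fin (d' + 1)) (k : Fin H),
        MRep (fun A B => applyT (T j k) (W j k * f A B)) (n * R) :=
      fun j k => (hfR.constMul (W j k)).applyT (T j k)
    have h2 : ∀ k : Fin H,
        MRep (fun A B => (List.ofFn fun j => applyT (T j k) (W j k * f A B)).prod)
          (m ^ d' * (n * R) ^ (d' + 1)) :=
      fun k => MRep.listProd d' _ (fun j => h1 j k)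
    have h3 : MRep (fun A B => ∑ k : Fin H,
          (List.ofFn fun j => applyT (T j k) (W j k * f A B)).prod)
        (H * (m ^ d' * (n * R) ^ (d' + 1))) := by
      have := MRep.finsum h2
      simpa [Fintype.card_fin] using this
    have h4 := h3.constMul WO
    have h5 := hfR.smul c
    have h6 := h4.add h5
    have h7 : MRep (fun A B => mhLayer H (d' + 1) WO W T c (f A B))
        (m * (H * (m ^ d' * (n * R) ^ (d' + 1))) + R) :=
      h6.congr fun A B => rfl
    set X := H * m ^ (d' + 1) * n ^ (d' + 1) * R ^ (d' + 1) with hX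
    have key : m * (H * (m ^ d' * (n * R) ^ (d' + 1))) + R
        ≤ H * m ^ (d' + 1) * n ^ (d' + 1 + 1) * R ^ (d' + 1) := by
      have hx : R ≤ X := by
        calc R ≤ R ^ (d' + 1) := Nat.le_self_pow (Nat.succ_ne_zero d') R
        _ ≤ (H * m ^ (d' + 1) * n ^ (d' + 1)) * R ^ (d' + 1) := by
            refine Nat.le_mul_of_pos_left _ ?_
            have : 0 < H := hH
            positivity
      have hmain : m * (H * (m ^ d' * (n * R) ^ (d' + 1))) = X := by
        rw [hX, mul_pow]; ring
      have h2n : H * m ^ (d' + 1) * n ^ (d' + 1 + 1) * R ^ (d' + 1) = n * X := by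
        rw [hX]; ring
      rw [hmain, h2n]
      have hnx : 2 * X ≤ n * X := Nat.mul_le_mul_right X hn
      omega
    have h8 := h7.mono key
    have h9 : sepRankM (fun A B => mhLayer H (d' + 1) WO W T c (f A B))
        ≤ ((H * m ^ (d' + 1) * n ^ (d' + 1 + 1) * R ^ (d' + 1) : ℕ) : ℕ∞) :=
      iSup₂_le fun i j => sepRank_le_of_hasRep (h8 i j)
    refine h9.trans ?_
    rw [hR]
    push_cast
    exact le_refl _
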